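/- Let d ≥ 1 and let γ be the standard Gaussian measure on ℝ^d. Let m₁, m₂ ∈ ℝ^d satisfy m₁ · m₂ < 0, and let μ = N(m₁, Id) and ν = N(m₂, Id) be the Gaussian measures with identity covariance and means m₁ and m₂ respectively. Then W₂(μ, ν)² = |m₁ − m₂|², Ent_γ(μ) = |m₁|²/2, Ent_γ(ν) = |m₂|²/2, and W₂(μ, ν)² > 2 Ent_γ(μ) + 2 Ent_γ(ν). In particular, the centering assumption in the symmetrized Talagrand inequality cannot be removed. -/

import Mathlib

open MeasureTheory ENNReal
open scoped RealInnerProductSpace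

/-- The standard Gaussian measure on `ℝ^d`, with density
`(2π)^{-d/2} exp(-|x|²/2)` with respect to Lebesgue measure. -/
noncomputable def stdGaussian (d : ℕ) : Measure (EuclideanSpace ℝ (Fin d)) :=
  volume.withDensity fun x =>
    ENNReal.ofReal ((2 * Real.pi) ^ (-(d : ℝ) / 2) * Real.exp (-‖x‖ ^ 2 / 2))

/-- `π` is a coupling of `μ` and `ν`: a measure on the product with the given marginals. -/
def IsCoupling {E : Type*} [MeasurableSpace E] (π : Measure (E × E)) (μ ν : Measure E) : Prop :=
  π.map Prod.fst = μ ∧ π.map Prod.snd = ν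

/-- The squared `L²` Kantorovich-Wasserstein distance `W₂(μ,ν)²`: the infimum of
`∫ |x-y|² dπ` over all couplings `π` of `μ` and `ν`. -/
noncomputable def W2sq {E : Type*} [MeasurableSpace E] [NormedAddCommGroup E]
    (μ ν : Measure E) : ℝ≥0∞ :=
  ⨅ (π : Measure (E × E)) (_ : IsCoupling π μ ν), ∫⁻ p, (‖p.1 - p.2‖₊ : ℝ≥0∞) ^ 2 ∂π

open Classical in
/-- The relative entropy (KL divergence) `Ent_γ(μ) = ∫ log(dμ/dγ) dμ` if `μ ≪ γ` (and the
integral makes sense), and `+∞` otherwise. -/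
noncomputable def relEnt {E : Type*} [MeasurableSpace E] (μ γ : Measure E) : ℝ≥0∞ :=
  if μ ≪ γ ∧ Integrable (fun x => Real.log (μ.rnDeriv γ x).toReal) μ
  then ENNReal.ofReal (∫ x, Real.log (μ.rnDeriv γ x).toReal ∂μ)
  else ∞

/-- The Gaussian measure `N(m, A)` on `ℝ^d` with mean `m` and (invertible) covariance
matrix `A`, given by its density with respect to Lebesgue measure. -/
noncomputable def gaussianMeasure {d : ℕ} (m : EuclideanSpace ℝ (Fin d))
    (A : Matrix (Fin d) (Fin d) ℝ) : Measure (EuclideanSpace ℝ (Fin d)) :=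
  volume.withDensity fun x =>
    ENNReal.ofReal (((2 * Real.pi) ^ d * A.det) ^ (-(1 : ℝ) / 2) *
      Real.exp (-⟪x - m, Matrix.toEuclideanLin A⁻¹ (x - m)⟫ / 2))

/-! ### Auxiliary lemmas -/

open GaussianFourier in
lemma aux_integrable_rexp_gauss {V : Type*} [NormedAddCommGroup V] [InnerProductSpace ℝ V]
    [FiniteDimensional ℝ V] [MeasurableSpace V] [BorelSpace V] {b : ℝ} (hb : 0 < b) :
    Integrable (fun v : V => Real.exp (-b * ‖v‖ ^ 2)) := by
  have h := (integrable_cexp_neg_mul_sq_norm_add (b := (b : ℂ))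
    (by simpa using hb) 0 (0 : V)).norm
  refine h.congr (Filter.Eventually.of_forall fun v => ?_)
  simp [Complex.norm_exp]
  norm_cast
  exact Or.inl rfl

lemma aux_map_withDensity_equiv {E : Type*} [MeasurableSpace E] (μ : Measure E) (e : E ≃ᵐ E)
    (he : MeasurePreserving e μ μ) (g : E → ℝ≥0∞) :
    (μ.withDensity g).map e = μ.withDensity (g ∘ e.symm) := by
  ext s hs
  rw [Measure.map_apply e.measurable hs, withDensity_apply _ (e.measurable hs),
    withDensity_apply _ hs]
  have h2 := MeasurePreserving.setLIntegral_comp_emb he e.measurableEmbedding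
    (g ∘ e.symm) (e ⁻¹' s)
  have h3 : ∀ a, (g ∘ e.symm) (e a) = g a := by intro a; simp
  simp only [h3] at h2
  rw [h2, Set.image_preimage_eq _ e.surjective]

variable {d : ℕ}

lemma aux_gauss_eq (m : EuclideanSpace ℝ (Fin d)) :
    gaussianMeasure m 1 = volume.withDensity fun x =>
      ENNReal.ofReal ((2 * Real.pi) ^ (-(d : ℝ) / 2) * Real.exp (-‖x - m‖ ^ 2 / 2)) := by
  unfold gaussianMeasure
  congr 1
  funext x
  have h1 : Matrix.toEuclideanLin ((1 : Matrix (Fin d) (Fin d) ℝ))⁻¹ = LinearMap.id := by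
    rw [inv_one]
    simp [Matrix.toEuclideanLin, Matrix.toLin'_one]
  rw [h1]
  have h2 : ((2 * Real.pi) ^ d * (1 : Matrix (Fin d) (Fin d) ℝ).det) ^ (-(1 : ℝ) / 2)
      = (2 * Real.pi) ^ (-(d : ℝ) / 2) := by
    rw [Matrix.det_one, mul_one, ← Real.rpow_natCast (2 * Real.pi) d,
      ← Real.rpow_mul (by positivity)]
    ring_nf
  rw [h2]
  congr 2
  have h3 : (∑ i : Fin d, (x - m) i * (x - m) i) = ‖x - m‖ ^ 2 := by
    rw [EuclideanSpace.norm_eq, Real.sq_sqrt (Finset.sum_nonneg fun i _ => by positivity)]; simp [sq]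
  simpa [LinearMap.id_apply, PiLp.inner_apply] using congrArg (fun t => -t / 2) h3

lemma aux_std_map_add (m : EuclideanSpace ℝ (Fin d)) :
    (stdGaussian d).map (· + m) = gaussianMeasure m 1 := by
  rw [aux_gauss_eq]
  have h : ((· + m) : EuclideanSpace ℝ (Fin d) → _) = (MeasurableEquiv.addRight m) := rfl
  rw [stdGaussian, h, aux_map_withDensity_equiv volume _ (measurePreserving_add_right volume m)]
  congr 1

lemma aux_std_density_integral :
    ∫ x : EuclideanSpace ℝ (Fin d),
      (2 * Real.pi) ^ (-(d : ℝ) / 2) * Real.exp (-‖x‖ ^ 2 / 2) = 1 := by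
  rw [integral_const_mul]
  have h : ∀ x : EuclideanSpace ℝ (Fin d),
      Real.exp (-‖x‖ ^ 2 / 2) = Real.exp (-(1/2) * ‖x‖ ^ 2) := by intro x; ring_nf
  simp_rw [h]
  rw [GaussianFourier.integral_rexp_neg_mul_sq_norm (by norm_num : (0:ℝ) < 1/2)]
  have h2 : Real.pi / (1/2) = 2 * Real.pi := by ring
  rw [h2, finrank_euclideanSpace_fin, ← Real.rpow_add (by positivity), neg_div,
    neg_add_cancel, Real.rpow_zero]

lemma aux_std_integrable_density :
    Integrable (fun x : EuclideanSpace ℝ (Fin d) =>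
      (2 * Real.pi) ^ (-(d : ℝ) / 2) * Real.exp (-‖x‖ ^ 2 / 2)) := by
  have h : ∀ x : EuclideanSpace ℝ (Fin d),
      Real.exp (-‖x‖ ^ 2 / 2) = Real.exp (-(1/2) * ‖x‖ ^ 2) := by intro x; ring_nf
  simp_rw [h]
  exact (aux_integrable_rexp_gauss (by norm_num)).const_mul _

instance : IsProbabilityMeasure (stdGaussian d) := by
  constructor
  rw [stdGaussian, withDensity_apply _ MeasurableSet.univ, Measure.restrict_univ,
    ← ofReal_integral_eq_lintegral_ofReal aux_std_integrable_density
      (Filter.Eventually.of_forall fun x => by positivity), aux_std_density_integral]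
  norm_num

instance (m : EuclideanSpace ℝ (Fin d)) : IsProbabilityMeasure (gaussianMeasure m 1) := by
  rw [← aux_std_map_add]
  exact Measure.isProbabilityMeasure_map (measurable_add_const m).aemeasurable

lemma aux_norm_le_exp (t : ℝ) : t ≤ Real.exp (t ^ 2 / 4) := by
  have h1 : t ≤ 1 + t ^ 2 / 4 := by nlinarith [sq_nonneg (t / 2 - 1)]
  have h2 : 1 + t ^ 2 / 4 ≤ Real.exp (t ^ 2 / 4) := by
    have := Real.add_one_le_exp (t ^ 2 / 4); linarith
  linarith

lemma aux_integrable_id_std :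
    Integrable (fun x : EuclideanSpace ℝ (Fin d) => x) (stdGaussian d) := by
  rw [stdGaussian]
  have hd : ∀ x : EuclideanSpace ℝ (Fin d),
      ENNReal.ofReal ((2 * Real.pi) ^ (-(d : ℝ) / 2) * Real.exp (-‖x‖ ^ 2 / 2))
      = (((2 * Real.pi) ^ (-(d : ℝ) / 2) * Real.exp (-‖x‖ ^ 2 / 2)).toNNReal : ℝ≥0∞) := by
    intro x; rfl
  simp_rw [hd]
  rw [integrable_withDensity_iff_integrable_smul₀]
  · have hnn : ∀ x : EuclideanSpace ℝ (Fin d),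
        (0:ℝ) ≤ (2 * Real.pi) ^ (-(d : ℝ) / 2) * Real.exp (-‖x‖ ^ 2 / 2) := fun x => by positivity
    have heq : ∀ x : EuclideanSpace ℝ (Fin d),
        ((2 * Real.pi) ^ (-(d : ℝ) / 2) * Real.exp (-‖x‖ ^ 2 / 2)).toNNReal • x
        = ((2 * Real.pi) ^ (-(d : ℝ) / 2) * Real.exp (-‖x‖ ^ 2 / 2)) • x := by
      intro x
      rw [NNReal.smul_def, Real.coe_toNNReal _ (hnn x)]
    simp_rw [heq]
    refine Integrable.mono' (((aux_integrable_rexp_gauss (V := EuclideanSpace ℝ (Fin d))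
      (by norm_num : (0:ℝ) < 1/4)).const_mul ((2 * Real.pi) ^ (-(d : ℝ) / 2))))
      ?_ (Filter.Eventually.of_forall fun x => ?_)
    · exact Continuous.aestronglyMeasurable (by fun_prop)
    · rw [norm_smul, Real.norm_of_nonneg (hnn x)]
      have h1 : ‖x‖ ≤ Real.exp (‖x‖ ^ 2 / 4) := aux_norm_le_exp _
      have h2 : Real.exp (-‖x‖ ^ 2 / 2) * Real.exp (‖x‖ ^ 2 / 4)
          = Real.exp (-(1/4) * ‖x‖ ^ 2) := by
        rw [← Real.exp_add]; ring_nf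
      calc (2 * Real.pi) ^ (-(d : ℝ) / 2) * Real.exp (-‖x‖ ^ 2 / 2) * ‖x‖
          ≤ (2 * Real.pi) ^ (-(d : ℝ) / 2) * Real.exp (-‖x‖ ^ 2 / 2) * Real.exp (‖x‖ ^ 2 / 4) :=
            mul_le_mul_of_nonneg_left h1 (hnn x)
        _ = (2 * Real.pi) ^ (-(d : ℝ) / 2) * Real.exp (-(1/4) * ‖x‖ ^ 2) := by
            rw [mul_assoc, h2]
  · exact (continuous_real_toNNReal.comp (by continuity)).measurable.aemeasurable

lemma aux_std_map_neg : (stdGaussian d).map (Neg.neg) = stdGaussian d := by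
  have h : (Neg.neg : EuclideanSpace ℝ (Fin d) → _) = (MeasurableEquiv.neg _) := rfl
  rw [stdGaussian, h, aux_map_withDensity_equiv volume _ (Measure.measurePreserving_neg volume)]
  congr 1
  funext x
  simp [MeasurableEquiv.neg]

lemma aux_integral_id_std : ∫ x : EuclideanSpace ℝ (Fin d), x ∂(stdGaussian d) = 0 := by
  have h1 : ∫ x : EuclideanSpace ℝ (Fin d), x ∂((stdGaussian d).map Neg.neg)
      = ∫ x : EuclideanSpace ℝ (Fin d), -x ∂(stdGaussian d) :=
    integral_map measurable_neg.aemeasurable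
      (by rw [aux_std_map_neg]; exact aux_integrable_id_std.aestronglyMeasurable)
  rw [aux_std_map_neg, integral_neg] at h1
  have h2 := eq_neg_iff_add_eq_zero.mp h1
  have h3 : (2 : ℝ) • (∫ x : EuclideanSpace ℝ (Fin d), x ∂(stdGaussian d)) = 0 := by
    rw [two_smul]; exact h2
  simpa using h3

lemma aux_integrable_id_gauss (m : EuclideanSpace ℝ (Fin d)) :
    Integrable (fun x : EuclideanSpace ℝ (Fin d) => x) (gaussianMeasure m 1) := by
  rw [← aux_std_map_add]
  have h : ((· + m) : EuclideanSpace ℝ (Fin d) → _) = (MeasurableEquiv.addRight m) := rfl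
  rw [h, (MeasurableEquiv.addRight m).measurableEmbedding.integrable_map_iff]
  exact aux_integrable_id_std.add (integrable_const m)

lemma aux_integral_id_gauss (m : EuclideanSpace ℝ (Fin d)) :
    ∫ x : EuclideanSpace ℝ (Fin d), x ∂(gaussianMeasure m 1) = m := by
  rw [← aux_std_map_add,
    integral_map (measurable_add_const m).aemeasurable
      (by rw [aux_std_map_add]; exact (aux_integrable_id_gauss m).aestronglyMeasurable)]
  rw [integral_add aux_integrable_id_std (integrable_const m), aux_integral_id_std,
    integral_const]
  simp

lemma aux_relEnt_gauss (m : EuclideanSpace ℝ (Fin d)) :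
    relEnt (gaussianMeasure m 1) (stdGaussian d) = ENNReal.ofReal (‖m‖ ^ 2 / 2) := by
  set h : EuclideanSpace ℝ (Fin d) → ℝ≥0∞ :=
    fun x => ENNReal.ofReal (Real.exp (⟪x, m⟫ - ‖m‖ ^ 2 / 2)) with hh
  have hcont : Continuous fun x : EuclideanSpace ℝ (Fin d) => Real.exp (⟪x, m⟫ - ‖m‖ ^ 2 / 2) :=
    Real.continuous_exp.comp ((continuous_id.inner continuous_const).sub continuous_const)
  have hmeas_h : Measurable h := ENNReal.continuous_ofReal.comp hcont |>.measurable
  have hmeas_g : Measurable fun x : EuclideanSpace ℝ (Fin d) =>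
      ENNReal.ofReal ((2 * Real.pi) ^ (-(d : ℝ) / 2) * Real.exp (-‖x‖ ^ 2 / 2)) := by
    apply ENNReal.continuous_ofReal.comp ?_ |>.measurable
    exact continuous_const.mul (Real.continuous_exp.comp (by continuity))
  have hμγ : gaussianMeasure m 1 = (stdGaussian d).withDensity h := by
    rw [stdGaussian, ← withDensity_mul _ hmeas_g hmeas_h, aux_gauss_eq]
    congr 1
    funext x
    show ENNReal.ofReal _ = ENNReal.ofReal _ * ENNReal.ofReal _
    rw [← ENNReal.ofReal_mul (by positivity)]
    congr 1
    rw [mul_assoc, ← Real.exp_add]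
    congr 2
    have := norm_sub_sq_real x m
    linarith
  have hac : gaussianMeasure m 1 ≪ stdGaussian d := hμγ ▸ withDensity_absolutelyContinuous _ _
  have hrn : (gaussianMeasure m 1).rnDeriv (stdGaussian d) =ᵐ[stdGaussian d] h := by
    rw [hμγ]; exact Measure.rnDeriv_withDensity _ hmeas_h
  have hrnμ : (gaussianMeasure m 1).rnDeriv (stdGaussian d) =ᵐ[gaussianMeasure m 1] h :=
    hac.ae_eq hrn
  have hlog : (fun x => Real.log (((gaussianMeasure m 1).rnDeriv (stdGaussian d) x).toReal))
      =ᵐ[gaussianMeasure m 1] fun x => ⟪x, m⟫ - ‖m‖ ^ 2 / 2 := by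
    filter_upwards [hrnμ] with x hx
    rw [hx, hh]
    simp only
    rw [ENNReal.toReal_ofReal (Real.exp_nonneg _), Real.log_exp]
  have hinner_int : Integrable (fun x : EuclideanSpace ℝ (Fin d) => ⟪x, m⟫)
      (gaussianMeasure m 1) := by
    have := ContinuousLinearMap.integrable_comp (innerSL ℝ m) (aux_integrable_id_gauss m)
    refine this.congr (Filter.Eventually.of_forall fun x => ?_)
    exact real_inner_comm x m
  have hint0 : Integrable (fun x : EuclideanSpace ℝ (Fin d) => ⟪x, m⟫ - ‖m‖ ^ 2 / 2)
      (gaussianMeasure m 1) := hinner_int.sub (integrable_const _)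
  have hint : Integrable
      (fun x => Real.log (((gaussianMeasure m 1).rnDeriv (stdGaussian d) x).toReal))
      (gaussianMeasure m 1) := hint0.congr hlog.symm
  rw [relEnt, if_pos ⟨hac, hint⟩, integral_congr_ae hlog]
  have hinner : ∫ x, ⟪x, m⟫ ∂(gaussianMeasure m 1) = ‖m‖ ^ 2 := by
    have hcomm : ∀ x : EuclideanSpace ℝ (Fin d), ⟪x, m⟫ = ⟪m, x⟫ := fun x => real_inner_comm m x
    simp_rw [hcomm]
    rw [integral_inner (aux_integrable_id_gauss m) m, aux_integral_id_gauss,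
      real_inner_self_eq_norm_sq]
  rw [integral_sub hinner_int (integrable_const _), hinner, integral_const, probReal_univ]
  simp only [ENNReal.toReal_one, one_smul, smul_eq_mul]
  congr 1
  ring


lemma aux_nnnorm_sq (y : EuclideanSpace ℝ (Fin d)) :
    (‖y‖₊ : ℝ≥0∞) ^ 2 = ENNReal.ofReal (‖y‖ ^ 2) := by
  rw [← coe_nnnorm, ← NNReal.coe_pow, ENNReal.ofReal_coe_nnreal, ENNReal.coe_pow]

local notation "E" => EuclideanSpace ℝ (Fin d)

set_option maxHeartbeats 1000000 in
lemma aux_W2sq_gauss (m₁ m₂ : EuclideanSpace ℝ (Fin d)) :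
    W2sq (gaussianMeasure m₁ 1) (gaussianMeasure m₂ 1) = ENNReal.ofReal (‖m₁ - m₂‖ ^ 2) := by
  have hmeas_int : Measurable fun p : E × E => (‖p.1 - p.2‖₊ : ℝ≥0∞) ^ 2 :=
    ((measurable_fst.sub measurable_snd).nnnorm.coe_nnreal_ennreal).pow_const 2
  apply le_antisymm
  · -- upper bound with the translation coupling
    set T : E → E × E := fun x => (x + m₁, x + m₂) with hT
    have hTm : Measurable T := (measurable_add_const m₁).prodMk (measurable_add_const m₂)
    set π := (stdGaussian d).map T with hπ
    have hcoup : IsCoupling π (gaussianMeasure m₁ 1) (gaussianMeasure m₂ 1) := by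
      constructor
      · rw [hπ, Measure.map_map measurable_fst hTm]
        have : Prod.fst ∘ T = (· + m₁) := rfl
        rw [this, aux_std_map_add]
      · rw [hπ, Measure.map_map measurable_snd hTm]
        have : Prod.snd ∘ T = (· + m₂) := rfl
        rw [this, aux_std_map_add]
    refine iInf_le_of_le π (iInf_le_of_le hcoup ?_)
    rw [hπ, lintegral_map hmeas_int hTm]
    have : ∀ x : E, (‖(x + m₁) - (x + m₂)‖₊ : ℝ≥0∞) ^ 2 = ENNReal.ofReal (‖m₁ - m₂‖ ^ 2) := by
      intro x
      rw [add_sub_add_left_eq_sub, aux_nnnorm_sq]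
    show ∫⁻ x, (‖(x + m₁) - (x + m₂)‖₊ : ℝ≥0∞) ^ 2 ∂(stdGaussian d) ≤ _
    simp_rw [this]
    rw [lintegral_const, measure_univ, mul_one]
  · -- lower bound
    refine le_iInf fun π => le_iInf fun hcoup => ?_
    by_cases hfin : ∫⁻ p, (‖p.1 - p.2‖₊ : ℝ≥0∞) ^ 2 ∂π = ∞
    · rw [hfin]; exact le_top
    have hπprob : IsProbabilityMeasure π := by
      constructor
      have h := congrArg (fun μ : Measure E => μ Set.univ) hcoup.1
      rw [Measure.map_apply measurable_fst MeasurableSet.univ] at h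
      simpa [measure_univ] using h
    set f : E × E → E := fun p => p.1 - p.2 with hf
    have hfsm : AEStronglyMeasurable f π :=
      ((continuous_fst.sub continuous_snd)).aestronglyMeasurable
    have h1 : Integrable (fun p : E × E => p.1) π := by
      have hi : Integrable (fun x : E => x) (π.map Prod.fst) :=
        hcoup.1 ▸ aux_integrable_id_gauss m₁
      exact (integrable_map_measure continuous_id.aestronglyMeasurable
        measurable_fst.aemeasurable).mp hi
    have h2 : Integrable (fun p : E × E => p.2) π := by
      have hi : Integrable (fun x : E => x) (π.map Prod.snd) :=
        hcoup.2 ▸ aux_integrable_id_gauss m₂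
      exact (integrable_map_measure continuous_id.aestronglyMeasurable
        measurable_snd.aemeasurable).mp hi
    have hFf : Integrable f π := h1.sub h2
    have e1 : ∫ p, p.1 ∂π = m₁ := by
      have h := integral_map (μ := π) (φ := Prod.fst) measurable_fst.aemeasurable
        (f := fun x : E => x) continuous_id.aestronglyMeasurable
      rw [hcoup.1, aux_integral_id_gauss] at h
      exact h.symm
    have e2 : ∫ p, p.2 ∂π = m₂ := by
      have h := integral_map (μ := π) (φ := Prod.snd) measurable_snd.aemeasurable
        (f := fun x : E => x) continuous_id.aestronglyMeasurable
      rw [hcoup.2, aux_integral_id_gauss] at h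
      exact h.symm
    have eF : ∫ p, f p ∂π = m₁ - m₂ := by
      rw [hf]
      simp only
      rw [integral_sub h1 h2, e1, e2]
    have hsq : Integrable (fun p => ‖f p‖ ^ 2) π := by
      refine ⟨(((continuous_fst.sub continuous_snd)).norm.pow 2).aestronglyMeasurable, ?_⟩
      rw [hasFiniteIntegral_iff_norm]
      have hp : ∀ p : E × E, ENNReal.ofReal ‖(‖f p‖ ^ 2 : ℝ)‖ = (‖f p‖₊ : ℝ≥0∞) ^ 2 := by
        intro p
        rw [Real.norm_of_nonneg (by positivity), ← aux_nnnorm_sq]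
      simp_rw [hp]
      exact lt_top_iff_ne_top.mpr hfin
    have hnorm_int : Integrable (fun p => ‖f p‖) π := hFf.norm
    set a : ℝ := ∫ p, ‖f p‖ ∂π with ha
    have expand : ∫ p, (‖f p‖ - a) ^ 2 ∂π = (∫ p, ‖f p‖ ^ 2 ∂π) - a ^ 2 := by
      have hpt : ∀ p : E × E, (‖f p‖ - a) ^ 2 = ‖f p‖ ^ 2 - 2 * a * ‖f p‖ + a ^ 2 := by
        intro p; ring
      simp_rw [hpt]
      calc ∫ p, (‖f p‖ ^ 2 - 2 * a * ‖f p‖ + a ^ 2) ∂π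
          = (∫ p, (‖f p‖ ^ 2 - 2 * a * ‖f p‖) ∂π) + ∫ _p : E × E, a ^ 2 ∂π :=
            integral_add (hsq.sub (hnorm_int.const_mul (2 * a))) (integrable_const _)
        _ = (∫ p, ‖f p‖ ^ 2 ∂π) - (∫ p, 2 * a * ‖f p‖ ∂π) + ∫ _p : E × E, a ^ 2 ∂π := by
            rw [integral_sub hsq (hnorm_int.const_mul (2 * a))]
        _ = (∫ p, ‖f p‖ ^ 2 ∂π) - 2 * a * a + a ^ 2 := by
            rw [integral_const_mul, integral_const, probReal_univ, ← ha]
            simp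
        _ = (∫ p, ‖f p‖ ^ 2 ∂π) - a ^ 2 := by ring
    have hkey : a ^ 2 ≤ ∫ p, ‖f p‖ ^ 2 ∂π := by
      have hnn : (0:ℝ) ≤ ∫ p, (‖f p‖ - a) ^ 2 ∂π :=
        integral_nonneg fun p => sq_nonneg _
      linarith [expand ▸ hnn]
    have hna : ‖m₁ - m₂‖ ≤ a := by
      rw [← eF]
      exact norm_integral_le_integral_norm f
    have hfinsq : ‖m₁ - m₂‖ ^ 2 ≤ ∫ p, ‖f p‖ ^ 2 ∂π := by
      have : ‖m₁ - m₂‖ ^ 2 ≤ a ^ 2 := by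
        have h0 : (0:ℝ) ≤ ‖m₁ - m₂‖ := norm_nonneg _
        nlinarith
      linarith
    have hlint : ∫⁻ p, (‖p.1 - p.2‖₊ : ℝ≥0∞) ^ 2 ∂π = ENNReal.ofReal (∫ p, ‖f p‖ ^ 2 ∂π) := by
      rw [ofReal_integral_eq_lintegral_ofReal hsq
        (Filter.Eventually.of_forall fun p => by positivity)]
      refine lintegral_congr fun p => ?_
      rw [← aux_nnnorm_sq]
    rw [hlint]
    exact ENNReal.ofReal_le_ofReal hfinsq

/-- **The centering assumption cannot be removed**: for `μ = N(m₁, Id)`, `ν = N(m₂, Id)` with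
`m₁ · m₂ < 0` one has `W₂(μ,ν)² = |m₁ - m₂|²`, `Ent_γ(μ) = |m₁|²/2`, `Ent_γ(ν) = |m₂|²/2`, and
`W₂(μ,ν)² > 2 Ent_γ(μ) + 2 Ent_γ(ν)`. -/
theorem symmetrized_talagrand_fails_noncentered (d : ℕ) (hd : 1 ≤ d)
    (m₁ m₂ : EuclideanSpace ℝ (Fin d)) (hm : ⟪m₁, m₂⟫ < 0) :
    W2sq (gaussianMeasure m₁ 1) (gaussianMeasure m₂ 1) = ENNReal.ofReal (‖m₁ - m₂‖ ^ 2) ∧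
    relEnt (gaussianMeasure m₁ 1) (stdGaussian d) = ENNReal.ofReal (‖m₁‖ ^ 2 / 2) ∧
    relEnt (gaussianMeasure m₂ 1) (stdGaussian d) = ENNReal.ofReal (‖m₂‖ ^ 2 / 2) ∧
    2 * relEnt (gaussianMeasure m₁ 1) (stdGaussian d) +
        2 * relEnt (gaussianMeasure m₂ 1) (stdGaussian d) <
      W2sq (gaussianMeasure m₁ 1) (gaussianMeasure m₂ 1) := by
  refine ⟨aux_W2sq_gauss m₁ m₂, aux_relEnt_gauss m₁, aux_relEnt_gauss m₂, ?_⟩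
  rw [aux_W2sq_gauss m₁ m₂, aux_relEnt_gauss m₁, aux_relEnt_gauss m₂]
  have h1 : (2:ℝ≥0∞) * ENNReal.ofReal (‖m₁‖ ^ 2 / 2) = ENNReal.ofReal (‖m₁‖ ^ 2) := by
    rw [show (2:ℝ≥0∞) * ENNReal.ofReal (‖m₁‖ ^ 2 / 2) = ENNReal.ofReal 2 * ENNReal.ofReal (‖m₁‖ ^ 2 / 2) by simp, ← ENNReal.ofReal_mul (by norm_num)]
    ring_nf
  have h2 : (2:ℝ≥0∞) * ENNReal.ofReal (‖m₂‖ ^ 2 / 2) = ENNReal.ofReal (‖m₂‖ ^ 2) := by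
    rw [show (2:ℝ≥0∞) * ENNReal.ofReal (‖m₂‖ ^ 2 / 2) = ENNReal.ofReal 2 * ENNReal.ofReal (‖m₂‖ ^ 2 / 2) by simp, ← ENNReal.ofReal_mul (by norm_num)]
    ring_nf
  rw [h1, h2, ← ENNReal.ofReal_add (by positivity) (by positivity)]
  apply ENNReal.ofReal_lt_ofReal_iff_of_nonneg (by positivity) |>.mpr
  · have hns : ‖m₁ - m₂‖ ^ 2 = ‖m₁‖ ^ 2 - 2 * ⟪m₁, m₂⟫ + ‖m₂‖ ^ 2 := norm_sub_sq_real m₁ m₂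
    nlinarith [hns]
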